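/- If Ψ is a coalition partition of a path P_n and some part of Ψ is a singleton dominating set, then n ≤ 3. Consequently, for every n ≥ 4, no coalition graph of a path P_n contains an isolated vertex, so P_n does not define the coalition graphs K̄_2 (two isolated vertices) and K_1 ∪ K_2. -/

import Mathlib

open SimpleGraph

attribute [local instance] Classical.propDecidable

def Dominates {V : Type*} (G : SimpleGraph V) (S : Set V) : Prop :=
  ∀ v, v ∉ S → ∃ u ∈ S, G.Adj u v

def Coalition {V : Type*} (G : SimpleGraph V) (A B : Set V) : Prop :=
  Disjoint A B ∧ ¬ Dominates G A ∧ ¬ Dominates G B ∧ Dominates G (A ∪ B)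

def IsCoalitionPartition {V : Type*} (G : SimpleGraph V) (P : Finset (Set V)) : Prop :=
  (∀ A ∈ P, A.Nonempty) ∧
  (∀ A ∈ P, ∀ B ∈ P, A ≠ B → Disjoint A B) ∧
  (∀ v : V, ∃ A ∈ P, v ∈ A) ∧
  (∀ A ∈ P, (Dominates G A ∧ ∃ v, A = {v}) ∨
    (¬ Dominates G A ∧ ∃ B ∈ P, B ≠ A ∧ Coalition G A B))

noncomputable def coalitionNumber {V : Type*} (G : SimpleGraph V) : ℕ :=
  sSup {n | ∃ P : Finset (Set V), IsCoalitionPartition G P ∧ P.card = n}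

def coalitionGraph {V : Type*} (G : SimpleGraph V) (P : Finset (Set V)) :
    SimpleGraph {A : Set V // A ∈ P} where
  Adj A B := Coalition G A.1 B.1
  symm := by
    constructor
    rintro A B ⟨d, na, nb, u⟩
    exact ⟨d.symm, nb, na, by rwa [Set.union_comm]⟩
  loopless := by
    constructor
    rintro ⟨A, hA⟩ ⟨d, na, nb, u⟩
    rw [Set.union_self] at u
    exact na u

/-- `K_1 ∪ K_2`: vertex `0` isolated and an edge between `1` and `2`. -/
def K1UnionK2 : SimpleGraph (Fin 3) :=
  SimpleGraph.fromEdgeSet {s(1, 2)}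

lemma no_single_dom (n : ℕ) (hn : 4 ≤ n) (v : Fin n) :
    ¬ Dominates (SimpleGraph.pathGraph n) {v} := by
  intro hd
  by_cases h0 : v.val = 0
  · obtain ⟨w, hw, hadj⟩ := hd ⟨2, by omega⟩ (by simp [Fin.ext_iff]; omega)
    rw [Set.mem_singleton_iff] at hw; subst hw
    rw [SimpleGraph.pathGraph_adj] at hadj
    simp at hadj; omega
  · by_cases h1 : v.val = 1
    · obtain ⟨w, hw, hadj⟩ := hd ⟨3, by omega⟩ (by simp [Fin.ext_iff]; omega)
      rw [Set.mem_singleton_iff] at hw; subst hw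
      rw [SimpleGraph.pathGraph_adj] at hadj
      simp at hadj; omega
    · obtain ⟨w, hw, hadj⟩ := hd ⟨0, by omega⟩ (by simp [Fin.ext_iff]; omega)
      rw [Set.mem_singleton_iff] at hw; subst hw
      rw [SimpleGraph.pathGraph_adj] at hadj
      simp at hadj; omega

theorem stmt10 :
    (∀ (n : ℕ) (P : Finset (Set (Fin n))),
      IsCoalitionPartition (SimpleGraph.pathGraph n) P →
      (∃ A ∈ P, Dominates (SimpleGraph.pathGraph n) A ∧ ∃ v, A = {v}) → n ≤ 3) ∧
    (∀ n : ℕ, 4 ≤ n → ∀ P : Finset (Set (Fin n)),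
      IsCoalitionPartition (SimpleGraph.pathGraph n) P →
      (∀ A : {A : Set (Fin n) // A ∈ P}, ∃ B,
        (coalitionGraph (SimpleGraph.pathGraph n) P).Adj A B) ∧
      ¬ Nonempty ((coalitionGraph (SimpleGraph.pathGraph n) P) ≃g
          (⊥ : SimpleGraph (Fin 2))) ∧
      ¬ Nonempty ((coalitionGraph (SimpleGraph.pathGraph n) P) ≃g K1UnionK2)) := by
  constructor
  · intro n P _ ⟨A, _, hdom, v, hAv⟩
    by_contra h
    exact no_single_dom n (by omega) v (hAv ▸ hdom)
  · intro n hn P hP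
    have hdeg : ∀ A : {A : Set (Fin n) // A ∈ P}, ∃ B,
        (coalitionGraph (SimpleGraph.pathGraph n) P).Adj A B := by
      rintro ⟨A, hA⟩
      rcases hP.2.2.2 A hA with ⟨hd, v, rfl⟩ | ⟨-, B, hB, hBA, hco⟩
      · exact absurd hd (no_single_dom n hn v)
      · exact ⟨⟨B, hB⟩, hco⟩
    refine ⟨hdeg, ?_, ?_⟩
    · rintro ⟨e⟩
      obtain ⟨B, hAB⟩ := hdeg (e.symm 0)
      exact e.map_rel_iff.mpr hAB
    · rintro ⟨e⟩
      obtain ⟨B, hAB⟩ := hdeg (e.symm 0)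
      have h := e.map_rel_iff.mpr hAB
      rw [RelIso.apply_symm_apply] at h
      have h2 : s(0, e B) ∈ ({s(1, 2)} : Set (Sym2 (Fin 3))) :=
        ((SimpleGraph.fromEdgeSet_adj _).mp h).1
      rw [Set.mem_singleton_iff, Sym2.eq, Sym2.rel_iff'] at h2
      rcases h2 with ⟨h3, -⟩ | ⟨h3, -⟩ <;> exact absurd h3 (by decide)
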